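/- Fix l ≥ 1, let x, a ∈ {0, 1, …, 2^l − 1}, and let c ∈ {0, 1}. Let x̂ = (x + a) mod 2^l, let a' = (2^l − a) mod 2^l, let y₀ = x̂ mod 2^{l−1}, and let y₁ = a' mod 2^{l−1}. Define MSB(u) = ⌊u / 2^{l−1}⌋ for u ∈ {0,…,2^l−1} and DReLU(x) = 1{x < 2^{l−1}}. Then DReLU(x) ⊕ c = MSB(x̂) ⊕ 1{2^{l−1} − y₀ − 1 < y₁} ⊕ MSB(a') ⊕ 1 ⊕ c, where ⊕ is XOR of bits. -/

import Mathlib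

/-- The masked-DReLU decomposition (Eq. 5) underlying PrivGNN's secure DReLU
protocol: with `x̂ = (x + a) mod 2^l`, `a' = (2^l − a) mod 2^l`,
`y₀ = x̂ mod 2^{l−1}`, `y₁ = a' mod 2^{l−1}`,
`DReLU(x) ⊕ c = MSB(x̂) ⊕ 1{2^{l−1} − y₀ − 1 < y₁} ⊕ MSB(a') ⊕ 1 ⊕ c`. -/
theorem masked_drelu (l : ℕ) (hl : 1 ≤ l) (x a : ℕ)
    (hx : x < 2 ^ l) (ha : a < 2 ^ l) (c : ℕ) (hc : c < 2)
    (xhat a' y₀ y₁ : ℕ)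
    (hxhat : xhat = (x + a) % 2 ^ l)
    (ha' : a' = (2 ^ l - a) % 2 ^ l)
    (hy₀ : y₀ = xhat % 2 ^ (l - 1))
    (hy₁ : y₁ = a' % 2 ^ (l - 1)) :
    (if x < 2 ^ (l - 1) then 1 else 0) ^^^ c =
      (xhat / 2 ^ (l - 1)) ^^^
        (if 2 ^ (l - 1) - y₀ - 1 < y₁ then 1 else 0) ^^^
        (a' / 2 ^ (l - 1)) ^^^ 1 ^^^ c := by
  set h := 2 ^ (l - 1) with hhdef
  have hh : 2 ^ l = 2 * h := by
    rw [hhdef, ← pow_succ']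
    congr 1
    omega
  have hpos : 0 < h := Nat.pow_pos (by norm_num)
  rw [hh] at hxhat ha' hx ha
  -- decomposition of x + a
  have hxhatlt : xhat < 2 * h := hxhat ▸ Nat.mod_lt _ (by omega)
  have ha'lt : a' < 2 * h := ha' ▸ Nat.mod_lt _ (by omega)
  set k1 := (x + a) / (2 * h) with hk1def
  have hk1 : k1 < 2 := by
    rw [hk1def]
    exact Nat.div_lt_of_lt_mul (by omega)
  have heq1 : x + a = 2 * h * k1 + xhat := by
    rw [hxhat, hk1def]
    exact (Nat.div_add_mod (x + a) (2 * h)).symm ▸ by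
      rw [← Nat.div_add_mod (x + a) (2 * h)]
  -- a' + a
  have heq2 : a' + a = 0 ∨ a' + a = 2 * h := by
    rcases Nat.eq_zero_or_pos a with h0 | h0
    · left; rw [ha', h0]; simp
    · right
      rw [ha', Nat.mod_eq_of_lt (by omega)]
      omega
  -- bit decompositions
  set b₀ := xhat / h with hb0def
  set b₁ := a' / h with hb1def
  have hd0 : xhat = h * b₀ + y₀ := by rw [hy₀, hb0def]; exact (Nat.div_add_mod xhat h).symm
  have hd1 : a' = h * b₁ + y₁ := by rw [hy₁, hb1def]; exact (Nat.div_add_mod a' h).symm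
  have hy0lt : y₀ < h := hy₀ ▸ Nat.mod_lt _ hpos
  have hy1lt : y₁ < h := hy₁ ▸ Nat.mod_lt _ hpos
  have hb0 : b₀ < 2 := by rw [hb0def]; exact Nat.div_lt_of_lt_mul (by omega)
  have hb1 : b₁ < 2 := by rw [hb1def]; exact Nat.div_lt_of_lt_mul (by omega)
  clear_value k1 b₀ b₁
  clear hxhat ha' hy₀ hy₁ hk1def hb0def hb1def hhdef
  interval_cases c <;> interval_cases b₀ <;> interval_cases b₁ <;>
    interval_cases k1 <;> split_ifs <;> simp_all <;> omega
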